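/- Let T : ℝ → S² be the tangent indicatrix T(t) = ((t⁶−7t⁴+7t²−1)·i + (2t⁵−12t³+2t)·j + (−4t⁵+4t)·k)/(t²+1)³. Then the origin of ℝ³ is contained in the convex hull of the image of T. -/

import Mathlib

/-- For the tangent indicatrix
T(t) = ((t⁶−7t⁴+7t²−1), (2t⁵−12t³+2t), (−4t⁵+4t))/(t²+1)³,
the origin of ℝ³ is contained in the convex hull of the image of T. -/
theorem origin_in_convexHull_tangent_indicatrix :
    (0 : EuclideanSpace ℝ (Fin 3)) ∈
      convexHull ℝ (Set.range (fun t : ℝ =>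
        (WithLp.toLp 2 ![(t ^ 6 - 7 * t ^ 4 + 7 * t ^ 2 - 1) / (t ^ 2 + 1) ^ 3,
           (2 * t ^ 5 - 12 * t ^ 3 + 2 * t) / (t ^ 2 + 1) ^ 3,
           (-4 * t ^ 5 + 4 * t) / (t ^ 2 + 1) ^ 3] :
          EuclideanSpace ℝ (Fin 3)))) := by
  set f : ℝ → EuclideanSpace ℝ (Fin 3) := fun t : ℝ =>
        (WithLp.toLp 2 ![(t ^ 6 - 7 * t ^ 4 + 7 * t ^ 2 - 1) / (t ^ 2 + 1) ^ 3,
           (2 * t ^ 5 - 12 * t ^ 3 + 2 * t) / (t ^ 2 + 1) ^ 3,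
           (-4 * t ^ 5 + 4 * t) / (t ^ 2 + 1) ^ 3] :
          EuclideanSpace ℝ (Fin 3)) with hf
  have hc := convex_convexHull ℝ (Set.range f)
  have h3 : f 3 ∈ convexHull ℝ (Set.range f) :=
    subset_convexHull ℝ _ ⟨3, rfl⟩
  have h3' : f (-3) ∈ convexHull ℝ (Set.range f) :=
    subset_convexHull ℝ _ ⟨-3, rfl⟩
  have h0 : f 0 ∈ convexHull ℝ (Set.range f) :=
    subset_convexHull ℝ _ ⟨0, rfl⟩
  have hm : (1/2 : ℝ) • f 3 + (1/2 : ℝ) • f (-3) ∈ convexHull ℝ (Set.range f) :=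
    hc h3 h3' (by norm_num) (by norm_num) (by norm_num)
  have hfin : (125/153 : ℝ) • ((1/2 : ℝ) • f 3 + (1/2 : ℝ) • f (-3))
      + (28/153 : ℝ) • f 0 ∈ convexHull ℝ (Set.range f) :=
    hc hm h0 (by norm_num) (by norm_num) (by norm_num)
  have heq : (125/153 : ℝ) • ((1/2 : ℝ) • f 3 + (1/2 : ℝ) • f (-3))
      + (28/153 : ℝ) • f 0 = (0 : EuclideanSpace ℝ (Fin 3)) := by
    ext i
    fin_cases i <;>
      simp [hf, PiLp.add_apply, PiLp.smul_apply, smul_eq_mul] <;> norm_num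
  rwa [heq] at hfin
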